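/- Let γ_1,…,γ_M ≥ 0 with Γ = ∑_k γ_k > 0, and set p_k = γ_k/Γ. Let L_1,…,L_M be elements of a Banach algebra with ‖L_k‖ ≤ Ω for all k, and L = ∑_k γ_k L_k. For t ≥ 0, N ∈ ℕ with N ≥ 1, and ω = tΓ/N, we have ‖exp((t/N)L) − ∑_{k=1}^M p_k exp(ω L_k)‖ ≤ (tΓΩ/N)² · exp(tΓΩ/N). -/

import Mathlib

open NormedSpace

lemma exp_remainder_le
    {A : Type*} [NormedRing A] [NormedAlgebra ℝ A] [CompleteSpace A]
    (x : A) (r : ℝ) (hx : ‖x‖ ≤ r) :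
    ‖exp x - 1 - x‖ ≤ r ^ 2 / 2 * Real.exp r := by
  have hr : 0 ≤ r := le_trans (norm_nonneg x) hx
  have hsum : Summable fun n : ℕ => ((Nat.factorial n : ℝ)⁻¹) • x ^ n :=
    expSeries_summable' (𝕂 := ℝ) x
  have hsplit := Summable.sum_add_tsum_nat_add 2 hsum
  have hhead : ∑ i ∈ Finset.range 2, (Nat.factorial i : ℝ)⁻¹ • x ^ i = 1 + x := by
    simp [Finset.sum_range_succ, Nat.factorial]
  have hexp : exp x = ∑' n : ℕ, ((Nat.factorial n : ℝ)⁻¹) • x ^ n := by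
    rw [exp_eq_tsum ℝ]
  have hrem : exp x - 1 - x = ∑' n : ℕ, ((Nat.factorial (n+2) : ℝ)⁻¹) • x ^ (n + 2) := by
    rw [hexp, ← hsplit, hhead]; abel
  rw [hrem]
  have hgsum : HasSum (fun n : ℕ => r ^ 2 / 2 * (r ^ n / Nat.factorial n))
      (r ^ 2 / 2 * Real.exp r) := by
    have := expSeries_div_hasSum_exp (𝔸 := ℝ) r
    rw [← Real.exp_eq_exp_ℝ] at this
    exact this.mul_left _
  refine tsum_of_norm_bounded hgsum fun n => ?_
  have h1 : ‖((Nat.factorial (n+2) : ℝ)⁻¹) • x ^ (n + 2)‖ ≤ (Nat.factorial (n+2) : ℝ)⁻¹ * r ^ (n + 2) := by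
    rw [norm_smul]
    have : ‖x ^ (n + 2)‖ ≤ r ^ (n + 2) :=
      le_trans (norm_pow_le' x (by omega)) (pow_le_pow_left₀ (norm_nonneg x) hx _)
    have hinv : (0 : ℝ) ≤ (Nat.factorial (n+2) : ℝ)⁻¹ := by positivity
    calc ‖((Nat.factorial (n+2) : ℝ)⁻¹)‖ * ‖x ^ (n + 2)‖
        = (Nat.factorial (n+2) : ℝ)⁻¹ * ‖x ^ (n + 2)‖ := by
          rw [Real.norm_eq_abs, abs_of_nonneg hinv]
      _ ≤ (Nat.factorial (n+2) : ℝ)⁻¹ * r ^ (n + 2) := by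
          exact mul_le_mul_of_nonneg_left this hinv
  refine h1.trans ?_
  have hfact : (2 * Nat.factorial n : ℝ) ≤ (Nat.factorial (n+2) : ℝ) := by
    have : 2 * Nat.factorial n ≤ Nat.factorial (n+2) := by
      rw [Nat.factorial_succ, Nat.factorial_succ]
      calc 2 * Nat.factorial n ≤ ((n + 2) * (n + 1)) * Nat.factorial n := by
            apply Nat.mul_le_mul_right; nlinarith
        _ = (n + 2) * ((n + 1) * Nat.factorial n) := by ring
    exact_mod_cast this
  have hfpos : (0 : ℝ) < 2 * (Nat.factorial n : ℝ) := by positivity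
  have key : r ^ (n + 2) / (Nat.factorial (n+2) : ℝ) ≤ r ^ (n + 2) / (2 * (Nat.factorial n : ℝ)) :=
    div_le_div_of_nonneg_left (by positivity) hfpos hfact
  calc (Nat.factorial (n+2) : ℝ)⁻¹ * r ^ (n + 2) = r ^ (n + 2) / (Nat.factorial (n+2) : ℝ) := by ring
    _ ≤ r ^ (n + 2) / (2 * (Nat.factorial n : ℝ)) := key
    _ = r ^ 2 / 2 * (r ^ n / Nat.factorial n) := by rw [pow_add]; ring

theorem qdrift_step_bound
    {A : Type*} [NormedRing A] [NormedAlgebra ℝ A] [CompleteSpace A]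
    (M : ℕ) (γ : Fin M → ℝ) (hγ : ∀ k, 0 ≤ γ k)
    (Γ : ℝ) (hΓ : Γ = ∑ k, γ k) (hΓpos : 0 < Γ)
    (L : Fin M → A) (Ω : ℝ) (hL : ∀ k, ‖L k‖ ≤ Ω)
    (t : ℝ) (ht : 0 ≤ t) (N : ℕ) (hN : 1 ≤ N)
    (ω : ℝ) (hω : ω = t * Γ / N) :
    ‖NormedSpace.exp ((t / N) • ∑ k, γ k • L k)
        - ∑ k, (γ k / Γ) • NormedSpace.exp (ω • L k)‖
      ≤ (t * Γ * Ω / N) ^ 2 * Real.exp (t * Γ * Ω / N) := by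
  set s : ℝ := t * Γ * Ω / N with hs_def
  have hM : 0 < M := by
    by_contra h
    push_neg at h
    have hM0 : M = 0 := by omega
    subst hM0
    simp at hΓ
    rw [hΓ] at hΓpos
    exact lt_irrefl 0 hΓpos
  have hΩ : 0 ≤ Ω := le_trans (norm_nonneg _) (hL ⟨0, hM⟩)
  have hNpos : (0 : ℝ) < N := by exact_mod_cast hN
  have hΓne : Γ ≠ 0 := ne_of_gt hΓpos
  have hω0 : 0 ≤ ω := by rw [hω]; positivity
  have hs0 : 0 ≤ s := by rw [hs_def]; positivity
  have hp : ∑ k, γ k / Γ = 1 := by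
    rw [← Finset.sum_div, ← hΓ, div_self hΓne]
  set x : A := (t / N) • ∑ k, γ k • L k with hx_def
  have hxnorm : ‖x‖ ≤ s := by
    rw [hx_def, norm_smul, Real.norm_eq_abs, abs_of_nonneg (by positivity)]
    have h1 : ‖∑ k, γ k • L k‖ ≤ Γ * Ω := by
      calc ‖∑ k, γ k • L k‖ ≤ ∑ k, ‖γ k • L k‖ := norm_sum_le _ _
        _ ≤ ∑ k, γ k * Ω := by
            refine Finset.sum_le_sum fun k _ => ?_
            rw [norm_smul, Real.norm_eq_abs, abs_of_nonneg (hγ k)]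
            exact mul_le_mul_of_nonneg_left (hL k) (hγ k)
        _ = Γ * Ω := by rw [← Finset.sum_mul, ← hΓ]
    calc t / N * ‖∑ k, γ k • L k‖ ≤ t / N * (Γ * Ω) :=
          mul_le_mul_of_nonneg_left h1 (by positivity)
      _ = s := by rw [hs_def]; ring
  have hknorm : ∀ k, ‖ω • L k‖ ≤ s := by
    intro k
    rw [norm_smul, Real.norm_eq_abs, abs_of_nonneg hω0]
    calc ω * ‖L k‖ ≤ ω * Ω := mul_le_mul_of_nonneg_left (hL k) hω0
      _ = s := by rw [hω, hs_def]; ring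
  have hsum1 : ∑ k, (γ k / Γ) • (1 : A) = 1 := by
    rw [← Finset.sum_smul, hp, one_smul]
  have hsum2 : ∑ k, (γ k / Γ) • (ω • L k) = x := by
    rw [hx_def, Finset.smul_sum]
    refine Finset.sum_congr rfl fun k _ => ?_
    rw [smul_smul, smul_smul]
    congr 1
    rw [hω]
    field_simp
  have hid : exp x - ∑ k, (γ k / Γ) • exp (ω • L k)
      = (exp x - 1 - x) - ∑ k, (γ k / Γ) • (exp (ω • L k) - 1 - ω • L k) := by
    have : ∑ k, (γ k / Γ) • (exp (ω • L k) - 1 - ω • L k)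
        = ∑ k, (γ k / Γ) • exp (ω • L k) - ∑ k, (γ k / Γ) • (1 : A)
          - ∑ k, (γ k / Γ) • (ω • L k) := by
      rw [← Finset.sum_sub_distrib, ← Finset.sum_sub_distrib]
      refine Finset.sum_congr rfl fun k _ => ?_
      rw [smul_sub, smul_sub]
    rw [this, hsum1, hsum2]; abel
  have hbound1 : ‖exp x - 1 - x‖ ≤ s ^ 2 / 2 * Real.exp s :=
    exp_remainder_le x s hxnorm
  have hbound2 : ‖∑ k, (γ k / Γ) • (exp (ω • L k) - 1 - ω • L k)‖
      ≤ s ^ 2 / 2 * Real.exp s := by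
    calc ‖∑ k, (γ k / Γ) • (exp (ω • L k) - 1 - ω • L k)‖
        ≤ ∑ k, ‖(γ k / Γ) • (exp (ω • L k) - 1 - ω • L k)‖ := norm_sum_le _ _
      _ ≤ ∑ k, (γ k / Γ) * (s ^ 2 / 2 * Real.exp s) := by
          refine Finset.sum_le_sum fun k _ => ?_
          rw [norm_smul, Real.norm_eq_abs,
            abs_of_nonneg (div_nonneg (hγ k) hΓpos.le)]
          exact mul_le_mul_of_nonneg_left
            (exp_remainder_le _ s (hknorm k)) (div_nonneg (hγ k) hΓpos.le)
      _ = s ^ 2 / 2 * Real.exp s := by rw [← Finset.sum_mul, hp, one_mul]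
  calc ‖exp x - ∑ k, (γ k / Γ) • exp (ω • L k)‖
      ≤ ‖exp x - 1 - x‖ + ‖∑ k, (γ k / Γ) • (exp (ω • L k) - 1 - ω • L k)‖ := by
        rw [hid]; exact norm_sub_le _ _
    _ ≤ s ^ 2 / 2 * Real.exp s + s ^ 2 / 2 * Real.exp s := add_le_add hbound1 hbound2
    _ = s ^ 2 * Real.exp s := by ring
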